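/- For partitions λ of n with at most r parts, the maximum value of c_λ = Σ_{i=1}^r λ_i(λ_i + r - 2i + 1) over all such λ is attained uniquely at λ = (n) (the one-row partition), where c_{(n)} = n(n + r - 1). -/

import Mathlib

open scoped BigOperators

/-- Among partitions `λ` of `n` with at most `r ≥ 1` parts, the Casimir eigenvalue
`c_λ = Σ_{i=1}^r λ_i (λ_i + r - 2i + 1)` is maximized uniquely by the one-row
partition `(n)`, with value `n(n + r - 1)`. -/
theorem casimir_max_one_row (n r : ℕ) (hr : 1 ≤ r) (p : ℕ → ℕ) (hp : Antitone p)
    (hparts : ∀ i, r ≤ i → p i = 0) (hpn : ∑ᶠ i : ℕ, p i = n) :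
    (∑ i ∈ Finset.range r, (p i : ℤ) * ((p i : ℤ) + r - 2 * i - 1)) ≤
        (n : ℤ) * ((n : ℤ) + r - 1) ∧
      ((∑ i ∈ Finset.range r, (p i : ℤ) * ((p i : ℤ) + r - 2 * i - 1)) =
          (n : ℤ) * ((n : ℤ) + r - 1) →
        p 0 = n ∧ ∀ i, 1 ≤ i → p i = 0) := by
  have hsum : ∑ i ∈ Finset.range r, p i = n := by
    rw [← hpn]
    exact (finsum_eq_sum_of_support_subset p (by
      intro x hx
      simp only [Function.mem_support] at hx
      simp only [Finset.coe_range, Set.mem_Iio]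
      by_contra h
      exact hx (hparts x (le_of_not_gt h)))).symm
  have hle : ∀ i, p i ≤ n := by
    intro i
    by_cases h : i < r
    · calc p i ≤ ∑ j ∈ Finset.range r, p j :=
        Finset.single_le_sum (fun j _ => Nat.zero_le _) (Finset.mem_range.mpr h)
      _ = n := hsum
    · rw [hparts i (le_of_not_gt h)]; exact Nat.zero_le _
  have hterm : ∀ i ∈ Finset.range r,
      (p i : ℤ) * ((p i : ℤ) + r - 2 * i - 1) ≤ (p i : ℤ) * ((n : ℤ) + r - 1) := by
    intro i _
    have h1 : (p i : ℤ) ≤ n := Int.ofNat_le.mpr (hle i)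
    have h2 : (0 : ℤ) ≤ p i := Int.ofNat_nonneg _
    have h3 : (0 : ℤ) ≤ i := Int.ofNat_nonneg _
    nlinarith
  have hsumle : ∑ i ∈ Finset.range r, (p i : ℤ) * ((p i : ℤ) + r - 2 * i - 1) ≤
      (n : ℤ) * ((n : ℤ) + r - 1) := by
    calc ∑ i ∈ Finset.range r, (p i : ℤ) * ((p i : ℤ) + r - 2 * i - 1)
        ≤ ∑ i ∈ Finset.range r, (p i : ℤ) * ((n : ℤ) + r - 1) :=
          Finset.sum_le_sum hterm
      _ = (∑ i ∈ Finset.range r, (p i : ℤ)) * ((n : ℤ) + r - 1) :=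
          (Finset.sum_mul _ _ _).symm
      _ = (n : ℤ) * ((n : ℤ) + r - 1) := by
          congr 1
          rw [← Nat.cast_sum, hsum]
  refine ⟨hsumle, fun heq => ?_⟩
  have hsum2 : ∑ i ∈ Finset.range r, (p i : ℤ) * ((n : ℤ) + r - 1) =
      (n : ℤ) * ((n : ℤ) + r - 1) := by
    rw [← Finset.sum_mul, ← Nat.cast_sum, hsum]
  have heach := (Finset.sum_eq_sum_iff_of_le hterm).mp (by rw [heq, hsum2])
  have hzero : ∀ i, 1 ≤ i → p i = 0 := by
    intro i hi
    by_cases h : i < r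
    · have := heach i (Finset.mem_range.mpr h)
      have h1 : (p i : ℤ) ≤ n := Int.ofNat_le.mpr (hle i)
      have h2 : (1 : ℤ) ≤ i := by exact_mod_cast hi
      have : (p i : ℤ) = 0 := by nlinarith
      exact_mod_cast this
    · exact hparts i (le_of_not_gt h)
  refine ⟨?_, hzero⟩
  have : ∑ i ∈ Finset.range r, p i = p 0 := by
    rw [Finset.sum_eq_single 0]
    · intro b _ hb
      exact hzero b (Nat.one_le_iff_ne_zero.mpr hb)
    · intro h
      exact absurd (Finset.mem_range.mpr hr) h
  rw [← hsum, this]
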